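/- arXiv:1707.06903 — 9 statements merged into one kernel-verified Lean document; each statement's English description precedes it below -/
import Mathlib

section
/- Suppose the bipartite object-feature graph associated to W is connected (i.e., for any two objects i, j there is a path i = i_0, i_1, ..., i_k = j such that consecutive objects share a common feature with positive weight). If G^{(1)} = P^{-1} W Q^{-1} W^T is symmetric, then all row sums p_{ii} of W are equal. -/
open BigOperators

theorem equal_row_sums_of_symmetric_connected {n m : ℕ} (W : Matrix (Fin n) (Fin m) ℝ)
    (hW : ∀ i j, 0 ≤ W i j)
    (hp : ∀ i, 0 < ∑ s, W i s)
    (hq : ∀ j, 0 < ∑ i, W i j)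
    (hconn : ∀ i j : Fin n,
      Relation.ReflTransGen (fun a b => 0 < ∑ s, W a s * W b s) i j)
    (hsym : ∀ i j : Fin n,
      (∑ s, W i s)⁻¹ * ∑ s, W i s * W j s / (∑ l, W l s) =
      (∑ s, W j s)⁻¹ * ∑ s, W j s * W i s / (∑ l, W l s)) :
    ∀ i j : Fin n, ∑ s, W i s = ∑ s, W j s := by
  have key : ∀ a b : Fin n, 0 < (∑ s, W a s * W b s) → ∑ s, W a s = ∑ s, W b s := by
    intro a b hab
    obtain ⟨s0, -, hs0⟩ : ∃ s ∈ Finset.univ, 0 < W a s * W b s := by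
      by_contra h
      push_neg at h
      have : (∑ s, W a s * W b s) ≤ 0 :=
        Finset.sum_nonpos fun s _ => h s (Finset.mem_univ s)
      linarith
    have hS : 0 < ∑ s, W a s * W b s / (∑ l, W l s) := by
      refine Finset.sum_pos' (fun s _ => ?_) ⟨s0, Finset.mem_univ s0, ?_⟩
      · exact div_nonneg (mul_nonneg (hW a s) (hW b s)) (le_of_lt (hq s))
      · exact div_pos hs0 (hq s0)
    have hsym' := hsym a b
    have hcomm : (∑ s, W b s * W a s / (∑ l, W l s))
        = ∑ s, W a s * W b s / (∑ l, W l s) := by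
      refine Finset.sum_congr rfl fun s _ => by ring
    rw [hcomm] at hsym'
    have hinv : (∑ s, W a s)⁻¹ = (∑ s, W b s)⁻¹ :=
      mul_right_cancel₀ (ne_of_gt hS) hsym'
    have := inv_inj.mp hinv
    exact this
  intro i j
  induction hconn i j with
  | refl => rfl
  | tail _ hbc ih => exact ih.trans (key _ _ hbc)
end

section
/- Let W be a row-stochastic n×m matrix with column-sum diagonal matrix Q (entries q_{kk} = Σ_i w_{ik}, assumed positive). Define D := 𝟏𝟏^T − W Q^{-1} W^T. Then D is symmetric and satisfies the triangle inequality: d_{ij} + d_{jk} ≥ d_{ik} for all i, j, k. -/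
open BigOperators

theorem D_symmetric_and_triangle {n m : ℕ} (W : Matrix (Fin n) (Fin m) ℝ)
    (hW : ∀ i j, 0 ≤ W i j)
    (hrow : ∀ i, ∑ k, W i k = 1)
    (hq : ∀ k, 0 < ∑ i, W i k) :
    ∀ d : Fin n → Fin n → ℝ,
      (∀ i j, d i j = 1 - ∑ k, W i k * W j k / (∑ l, W l k)) →
      (∀ i j, d i j = d j i) ∧ (∀ i j k, d i j + d j k ≥ d i k) := by
  intro d hd
  constructor
  · intro i j
    rw [hd, hd]
    congr 1
    apply Finset.sum_congr rfl
    intro c _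
    ring
  · intro i j k
    have key : ∀ c : Fin m,
        0 ≤ W j c + W i c * W k c / (∑ l, W l c) - W i c * W j c / (∑ l, W l c)
          - W j c * W k c / (∑ l, W l c) := by
      intro c
      have hqc : 0 < ∑ l, W l c := hq c
      set q := ∑ l, W l c with hqdef
      have hnum : 0 ≤ W j c * q + W i c * W k c - W i c * W j c - W j c * W k c := by
        by_cases hik : i = k
        · subst hik
          by_cases hij : i = j
          · subst hij
            have hle : W i c ≤ q := Finset.single_le_sum (f := fun l => W l c)
              (fun l _ => hW l c) (Finset.mem_univ i)
            nlinarith [hW i c]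
          · have hle : W i c + W j c ≤ q := by
              have hsub : ({i, j} : Finset (Fin n)) ⊆ Finset.univ := Finset.subset_univ _
              have := Finset.sum_le_sum_of_subset_of_nonneg hsub
                (fun l _ _ => hW l c)
              rwa [Finset.sum_pair hij] at this
            nlinarith [hW i c, hW j c, sq_nonneg (W i c - W j c), mul_nonneg (hW i c) (hW j c)]
        · have hle : W i c + W k c ≤ q := by
            have hsub : ({i, k} : Finset (Fin n)) ⊆ Finset.univ := Finset.subset_univ _
            have := Finset.sum_le_sum_of_subset_of_nonneg hsub
              (fun l _ _ => hW l c)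
            rwa [Finset.sum_pair hik] at this
          nlinarith [hW i c, hW k c, hW j c, mul_nonneg (hW i c) (hW k c)]
      have heq : W j c + W i c * W k c / q - W i c * W j c / q - W j c * W k c / q
          = (W j c * q + W i c * W k c - W i c * W j c - W j c * W k c) / q := by
        field_simp
      rw [heq]
      exact div_nonneg hnum hqc.le
    have hsum : 0 ≤ ∑ c, (W j c + W i c * W k c / (∑ l, W l c)
        - W i c * W j c / (∑ l, W l c) - W j c * W k c / (∑ l, W l c)) :=
      Finset.sum_nonneg fun c _ => key c
    have hexp : ∑ c, (W j c + W i c * W k c / (∑ l, W l c)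
        - W i c * W j c / (∑ l, W l c) - W j c * W k c / (∑ l, W l c))
        = d i j + d j k - d i k := by
      rw [hd, hd, hd]
      have h1 := hrow j
      simp only [Finset.sum_sub_distrib, Finset.sum_add_distrib]
      linarith
    linarith [hexp ▸ hsum]
end

section
/- For any three rows of a row-stochastic nonnegative matrix W with positive column sums q_{kk} ≥ w_{1k} + w_{2k} + w_{3k}, we have Σ_k [(w_{1k} + w_{3k}) w_{2k} − w_{1k} w_{3k}] / q_{kk} ≤ 2/3 < 1. -/
open BigOperators

theorem key_estimate {n m : ℕ} (W : Matrix (Fin n) (Fin m) ℝ)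
    (a b c : Fin n)
    (hW : ∀ i j, 0 ≤ W i j)
    (ha : ∑ k, W a k = 1) (hb : ∑ k, W b k = 1) (hc : ∑ k, W c k = 1)
    (hq : ∀ k, 0 < ∑ i, W i k)
    (hq3 : ∀ k, W a k + W b k + W c k ≤ ∑ i, W i k) :
    (∑ k, ((W a k + W c k) * W b k - W a k * W c k) / (∑ i, W i k)) ≤ 2/3 ∧
      (2/3 : ℝ) < 1 := by
  constructor
  · have key : ∀ k, ((W a k + W c k) * W b k - W a k * W c k) / (∑ i, W i k)
        ≤ 4/9 * W b k + 1/9 * (W a k + W c k) := by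
      intro k
      have hqk := hq k
      have h3 := hq3 k
      have ha' := hW a k
      have hb' := hW b k
      have hc' := hW c k
      rw [div_le_iff₀ hqk]
      have hR : (0:ℝ) ≤ 4/9 * W b k + 1/9 * (W a k + W c k) := by linarith
      have hmul : (0:ℝ) ≤ ((∑ i, W i k) - (W a k + W b k + W c k)) *
          (4/9 * W b k + 1/9 * (W a k + W c k)) :=
        mul_nonneg (by linarith) hR
      nlinarith [sq_nonneg (2 * W b k - (W a k + W c k)), mul_nonneg ha' hc']
    calc (∑ k, ((W a k + W c k) * W b k - W a k * W c k) / (∑ i, W i k))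
        ≤ ∑ k, (4/9 * W b k + 1/9 * (W a k + W c k)) :=
          Finset.sum_le_sum (fun k _ => key k)
      _ = 2/3 := by
          simp only [Finset.sum_add_distrib, ← Finset.mul_sum, mul_add]
          rw [ha, hb, hc]
          norm_num
  · norm_num
end

section
/- For any row-stochastic matrix W with column-sum diagonal matrix Q (positive diagonal), and any positive integer r, the matrix D^{(r)} := 𝟏𝟏^T − (W Q^{-1} W^T)^r satisfies the triangle inequality d^{(r)}_{ij} + d^{(r)}_{jk} ≥ d^{(r)}_{ik} for all i, j, k. -/
open Matrix BigOperators

private lemma rowsum_mul {n m p : ℕ} (A : Matrix (Fin n) (Fin m) ℝ)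
    (B : Matrix (Fin m) (Fin p) ℝ)
    (hA : ∀ i, ∑ k, A i k = 1) (hB : ∀ i, ∑ k, B i k = 1) :
    ∀ i, ∑ k, (A * B) i k = 1 := by
  intro i
  simp only [Matrix.mul_apply]
  rw [Finset.sum_comm]
  calc ∑ t, ∑ j, A i t * B t j = ∑ t, A i t * ∑ j, B t j := by
        simp [Finset.mul_sum]
    _ = 1 := by simp [hB, hA i]

private lemma mul_nonneg_entries {n m p : ℕ} (A : Matrix (Fin n) (Fin m) ℝ)
    (B : Matrix (Fin m) (Fin p) ℝ)
    (hA : ∀ i j, 0 ≤ A i j) (hB : ∀ i j, 0 ≤ B i j) :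
    ∀ i j, 0 ≤ (A * B) i j := by
  intro i j
  rw [Matrix.mul_apply]
  exact Finset.sum_nonneg fun t _ => mul_nonneg (hA i t) (hB t j)

/-- Order-1 triangle inequality: for nonnegative row-stochastic `V` with positive
column sums `q`, the matrix `V Q⁻¹ Vᵀ` satisfies `M i j + M j k ≤ 1 + M i k`. -/
private lemma base_tri {n m : ℕ} (V : Matrix (Fin n) (Fin m) ℝ) (q : Fin m → ℝ)
    (hV : ∀ i j, 0 ≤ V i j) (hrow : ∀ i, ∑ l, V i l = 1)
    (hcol : ∀ l, ∑ s, V s l = q l) (hq : ∀ l, 0 < q l)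
    (i j k : Fin n) :
    (V * Matrix.diagonal (fun l => (q l)⁻¹) * Vᵀ) i j +
      (V * Matrix.diagonal (fun l => (q l)⁻¹) * Vᵀ) j k ≤
      1 + (V * Matrix.diagonal (fun l => (q l)⁻¹) * Vᵀ) i k := by
  have hentry : ∀ a b, (V * Matrix.diagonal (fun l => (q l)⁻¹) * Vᵀ) a b
      = ∑ l, V a l * (q l)⁻¹ * V b l := by
    intro a b
    rw [Matrix.mul_apply]
    refine Finset.sum_congr rfl fun l _ => ?_
    rw [Matrix.mul_diagonal, Matrix.transpose_apply]
  rw [hentry, hentry, hentry]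
  have key : ∀ l, V i l * (q l)⁻¹ * V j l + V j l * (q l)⁻¹ * V k l
      ≤ V j l + V i l * (q l)⁻¹ * V k l := by
    intro l
    have hql := hq l
    have hinv : (0:ℝ) ≤ (q l)⁻¹ := (inv_pos.mpr hql).le
    have hjq : V j l ≤ q l := by
      rw [← hcol l]
      exact Finset.single_le_sum (fun s _ => hV s l) (Finset.mem_univ j)
    have h1 : V i l * V j l + V j l * V k l - V i l * V k l ≤ V j l * q l := by
      by_cases hik : i = k
      · subst hik
        nlinarith [sq_nonneg (V i l - V j l), hV i l, hV j l]
      · have hsum : V i l + V k l ≤ q l := by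
          rw [← hcol l]
          have hsub := Finset.sum_le_sum_of_subset_of_nonneg
            (Finset.subset_univ ({i, k} : Finset (Fin n)))
            (fun s _ _ => hV s l)
          rwa [Finset.sum_pair hik] at hsub
        nlinarith [hV i l, hV j l, hV k l]
    have h2 := mul_le_mul_of_nonneg_right h1 hinv
    have h3 : V j l * q l * (q l)⁻¹ = V j l := by
      field_simp
    nlinarith [h2, h3]
  have hsum := Finset.sum_le_sum (fun l (_ : l ∈ Finset.univ) => key l)
  simp only [Finset.sum_add_distrib] at hsum
  rw [hrow j] at hsum
  exact hsum

theorem D_r_triangle {n m : ℕ} (W : Matrix (Fin n) (Fin m) ℝ)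
    (hW : ∀ i j, 0 ≤ W i j)
    (hrow : ∀ i, ∑ k, W i k = 1)
    (hq : ∀ k, 0 < ∑ i, W i k) :
    ∀ r : ℕ, 1 ≤ r →
      ∀ i j k : Fin n,
        (1 - ((W * Matrix.diagonal (fun l => (∑ s, W s l)⁻¹) * Wᵀ) ^ r) i j) +
        (1 - ((W * Matrix.diagonal (fun l => (∑ s, W s l)⁻¹) * Wᵀ) ^ r) j k) ≥
        (1 - ((W * Matrix.diagonal (fun l => (∑ s, W s l)⁻¹) * Wᵀ) ^ r) i k) := by
  intro r hr i j k
  set q : Fin m → ℝ := fun l => ∑ s, W s l with hqdef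
  set S : Matrix (Fin n) (Fin n) ℝ :=
    W * Matrix.diagonal (fun l => (∑ s, W s l)⁻¹) * Wᵀ with hSdef
  -- entry formula for S
  have hSentry : ∀ a b, S a b = ∑ l, W a l * (q l)⁻¹ * W b l := by
    intro a b
    rw [hSdef, Matrix.mul_apply]
    refine Finset.sum_congr rfl fun l _ => ?_
    rw [Matrix.mul_diagonal, Matrix.transpose_apply]
  -- S nonnegative
  have hSnn : ∀ a b, 0 ≤ S a b := by
    intro a b
    rw [hSentry]
    exact Finset.sum_nonneg fun l _ =>
      mul_nonneg (mul_nonneg (hW a l) (inv_pos.mpr (hq l)).le) (hW b l)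
  -- S row sums = 1
  have hSrow : ∀ a, ∑ b, S a b = 1 := by
    intro a
    simp only [hSentry]
    rw [Finset.sum_comm]
    have : ∀ l, ∑ b, W a l * (q l)⁻¹ * W b l = W a l := by
      intro l
      rw [← Finset.mul_sum]
      have : ∑ b, W b l = q l := rfl
      rw [this, mul_assoc, inv_mul_cancel₀ (hq l).ne']
      ring
    simp only [this]
    exact hrow a
  -- S symmetric
  have hSsym : Sᵀ = S := by
    rw [hSdef, Matrix.transpose_mul, Matrix.transpose_mul,
      Matrix.transpose_transpose, Matrix.diagonal_transpose, Matrix.mul_assoc]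
  have hSpowsym : ∀ u : ℕ, (S ^ u)ᵀ = S ^ u := by
    intro u
    rw [Matrix.transpose_pow, hSsym]
  -- S^u nonneg and row sums 1
  have hSpow : ∀ u : ℕ, (∀ a b, 0 ≤ (S ^ u) a b) ∧ (∀ a, ∑ b, (S ^ u) a b = 1) := by
    intro u
    induction u with
    | zero =>
      constructor
      · intro a b
        simp [Matrix.one_apply]
        split <;> norm_num
      · intro a
        simp [Matrix.one_apply]
    | succ u ih =>
      rw [pow_succ]
      exact ⟨mul_nonneg_entries _ _ ih.1 hSnn, rowsum_mul _ _ ih.2 hSrow⟩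
  -- column sums of S^u are 1
  have hSpowcol : ∀ u : ℕ, ∀ t, ∑ s, (S ^ u) s t = 1 := by
    intro u t
    have : ∀ s, (S ^ u) s t = (S ^ u) t s := by
      intro s
      conv_lhs => rw [← hSpowsym u]
      rw [Matrix.transpose_apply]
    simp only [this]
    exact (hSpow u).2 t
  rcases Nat.even_or_odd r with ⟨u, hu⟩ | ⟨u, hu⟩
  · -- even case: r = u + u, S^r = S^u * I * (S^u)ᵀ
    have hrep : S ^ r = S ^ u * Matrix.diagonal (fun _ : Fin n => ((1:ℝ))⁻¹) * (S ^ u)ᵀ := by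
      have : Matrix.diagonal (fun _ : Fin n => ((1:ℝ))⁻¹) = 1 := by
        simp [Matrix.diagonal_one]
      rw [this, Matrix.mul_one, hSpowsym, ← pow_add, ← hu]
    have hb := base_tri (S ^ u) (fun _ => 1) (hSpow u).1 (hSpow u).2
      (fun l => hSpowcol u l) (fun _ => one_pos) i j k
    rw [← hrep] at hb
    linarith
  · -- odd case: r = 2u + 1, S^r = (S^u * W) * Q⁻¹ * (S^u * W)ᵀ
    set V : Matrix (Fin n) (Fin m) ℝ := S ^ u * W with hVdef
    have hVnn : ∀ a b, 0 ≤ V a b := mul_nonneg_entries _ _ (hSpow u).1 hW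
    have hVrow : ∀ a, ∑ b, V a b = 1 := rowsum_mul _ _ (hSpow u).2 hrow
    have hVcol : ∀ l, ∑ s, V s l = q l := by
      intro l
      simp only [hVdef, Matrix.mul_apply]
      rw [Finset.sum_comm]
      have : ∀ t, ∑ s, (S ^ u) s t * W t l = W t l := by
        intro t
        rw [← Finset.sum_mul, hSpowcol u t, one_mul]
      simp only [this]
      rfl
    have hrep : S ^ r = V * Matrix.diagonal (fun l => (q l)⁻¹) * Vᵀ := by
      rw [hVdef, Matrix.transpose_mul, hSpowsym]
      have : S ^ u * W * Matrix.diagonal (fun l => (q l)⁻¹) * (Wᵀ * S ^ u)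
          = S ^ u * (W * Matrix.diagonal (fun l => (q l)⁻¹) * Wᵀ) * S ^ u := by
        simp only [Matrix.mul_assoc]
      rw [this, ← hSdef, hu, show 2 * u + 1 = u + 1 + u by ring, pow_add, pow_succ]
    have hb := base_tri V q hVnn hVrow hVcol hq i j k
    rw [← hrep] at hb
    linarith
end

section
/- Let W be an n×m nonnegative matrix with row sums p_{ii} > 0 and column sums q_{kk} > 0, and let g^{(1)}(i,j) = (1/p_{ii}) Σ_s w_{is} w_{js} / q_{ss}. If min_i p_{ii} / max_i p_{ii} > 2/3, then the distance g_d^{(1)}(i,j) = 1 − g^{(1)}(i,j) satisfies the triangle inequality g_d^{(1)}(i,j) + g_d^{(1)}(j,k) ≥ g_d^{(1)}(i,k) for all i, j, k. -/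
open BigOperators

/-- Cauchy–Schwarz for the weighted sums `∑ a b / q`. -/
lemma gd_cauchy {m : ℕ} (a b q : Fin m → ℝ) (hq : ∀ s, 0 < q s) :
    (∑ s, a s * b s / q s) ^ 2 ≤
      (∑ s, a s * a s / q s) * (∑ s, b s * b s / q s) := by
  have h := Finset.sum_mul_sq_le_sq_mul_sq Finset.univ
    (fun s => a s / Real.sqrt (q s)) (fun s => b s / Real.sqrt (q s))
  have e1 : ∀ s : Fin m, a s / Real.sqrt (q s) * (b s / Real.sqrt (q s))
      = a s * b s / q s := by
    intro s
    rw [div_mul_div_comm, Real.mul_self_sqrt (hq s).le]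
  have e2 : ∀ (f : Fin m → ℝ) (s : Fin m), (f s / Real.sqrt (q s)) ^ 2
      = f s * f s / q s := by
    intro f s
    rw [div_pow, Real.sq_sqrt (hq s).le, sq]
  calc (∑ s, a s * b s / q s) ^ 2
      = (∑ s, a s / Real.sqrt (q s) * (b s / Real.sqrt (q s))) ^ 2 := by
        rw [Finset.sum_congr rfl fun s _ => e1 s]
    _ ≤ (∑ s, (a s / Real.sqrt (q s)) ^ 2) * (∑ s, (b s / Real.sqrt (q s)) ^ 2) := h
    _ = (∑ s, a s * a s / q s) * (∑ s, b s * b s / q s) := by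
        rw [Finset.sum_congr rfl fun s _ => e2 a s, Finset.sum_congr rfl fun s _ => e2 b s]

/-- Diagonal sums are bounded by the row sum. -/
lemma gd_diag_le {m : ℕ} (b q : Fin m → ℝ) (hq : ∀ s, 0 < q s) (hb : ∀ s, 0 ≤ b s)
    (hbq : ∀ s, b s ≤ q s) : ∑ s, b s * b s / q s ≤ ∑ s, b s :=
  Finset.sum_le_sum fun s _ => by
    rw [div_le_iff₀ (hq s)]
    nlinarith [mul_le_mul_of_nonneg_left (hbq s) (hb s)]

lemma gd_sum_nonneg {m : ℕ} (a b q : Fin m → ℝ) (hq : ∀ s, 0 < q s)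
    (ha : ∀ s, 0 ≤ a s) (hb : ∀ s, 0 ≤ b s) : 0 ≤ ∑ s, a s * b s / q s :=
  Finset.sum_nonneg fun s _ => div_nonneg (mul_nonneg (ha s) (hb s)) (hq s).le

/-- From `x^2 ≤ y^2`, `0 ≤ x`, `0 ≤ y`, conclude `x ≤ y`. -/
lemma gd_le_of_sq_le_sq {x y : ℝ} (h : x ^ 2 ≤ y ^ 2) (hx : 0 ≤ x) (hy : 0 ≤ y) :
    x ≤ y := by nlinarith [h, hx, hy]

/-- The key summed estimate for the triangle inequality (distinct rows). -/
lemma gd_key {m : ℕ} (a b c q : Fin m → ℝ) (P Q u : ℝ)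
    (hPd : P = ∑ s, a s) (hQd : Q = ∑ s, b s)
    (ha : ∀ s, 0 ≤ a s) (hb : ∀ s, 0 ≤ b s) (hc : ∀ s, 0 ≤ c s)
    (hq : ∀ s, 0 < q s) (habc : ∀ s, a s + b s + c s ≤ q s)
    (hP : 0 ≤ P) (hQ : 0 ≤ Q) (hu0 : 0 ≤ u) (hu1 : Q - P ≤ u) :
    P * (∑ s, b s * c s / q s) + Q * (∑ s, a s * b s / q s) - Q * (∑ s, a s * c s / q s)
      ≤ P * Q - P * (∑ s, b s * b s / q s) + u * (∑ s, a s * b s / q s) := by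
  have per : ∀ s : Fin m,
      P * (b s * c s / q s) + Q * (a s * b s / q s) - Q * (a s * c s / q s)
        ≤ P * b s - P * (b s * b s / q s) + u * (a s * b s / q s) := by
    intro s
    have hinv : q s * (q s)⁻¹ = 1 := mul_inv_cancel₀ (hq s).ne'
    have h1 : P * (b s * c s) + Q * (a s * b s) - Q * (a s * c s)
        ≤ P * (b s * q s) - P * (b s * b s) + u * (a s * b s) := by
      have t1 : 0 ≤ P * b s * (q s - (a s + b s + c s)) :=
        mul_nonneg (mul_nonneg hP (hb s)) (by linarith [habc s])
      have t2 : 0 ≤ a s * b s * (P + u - Q) :=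
        mul_nonneg (mul_nonneg (ha s) (hb s)) (by linarith)
      have t3 : 0 ≤ Q * (a s * c s) :=
        mul_nonneg hQ (mul_nonneg (ha s) (hc s))
      nlinarith [t1, t2, t3]
    have h2 : (P * (b s * c s) + Q * (a s * b s) - Q * (a s * c s)) * (q s)⁻¹
        ≤ (P * (b s * q s) - P * (b s * b s) + u * (a s * b s)) * (q s)⁻¹ :=
      mul_le_mul_of_nonneg_right h1 (inv_nonneg.mpr (hq s).le)
    calc P * (b s * c s / q s) + Q * (a s * b s / q s) - Q * (a s * c s / q s)
        = (P * (b s * c s) + Q * (a s * b s) - Q * (a s * c s)) * (q s)⁻¹ := by ring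
      _ ≤ (P * (b s * q s) - P * (b s * b s) + u * (a s * b s)) * (q s)⁻¹ := h2
      _ = P * b s - P * (b s * b s / q s) + u * (a s * b s / q s) := by
          linear_combination (P * b s) * hinv
  have hsum := Finset.sum_le_sum (fun s (_ : s ∈ Finset.univ) => per s)
  have eL : ∑ s, (P * (b s * c s / q s) + Q * (a s * b s / q s) - Q * (a s * c s / q s))
      = P * (∑ s, b s * c s / q s) + Q * (∑ s, a s * b s / q s)
        - Q * (∑ s, a s * c s / q s) := by
    rw [Finset.sum_sub_distrib, Finset.sum_add_distrib, ← Finset.mul_sum, ← Finset.mul_sum,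
      ← Finset.mul_sum]
  have eR : ∑ s, (P * b s - P * (b s * b s / q s) + u * (a s * b s / q s))
      = P * Q - P * (∑ s, b s * b s / q s) + u * (∑ s, a s * b s / q s) := by
    rw [Finset.sum_add_distrib, Finset.sum_sub_distrib, ← Finset.mul_sum, ← Finset.mul_sum,
      ← Finset.mul_sum, ← hQd]
  rw [eL, eR] at hsum
  exact hsum

/-- Pure real-number part of the main estimate for distinct rows. -/
lemma gd_alg_main (P Q R Sab Sbc Sac A B C u : ℝ)
    (hP : 0 < P) (hQ : 0 < Q) (hR : 0 < R)
    (hPQ : 2 * Q ≤ 3 * P) (hRQ : 2 * R ≤ 3 * Q)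
    (hSab0 : 0 ≤ Sab) (hSbc0 : 0 ≤ Sbc) (hSac0 : 0 ≤ Sac)
    (hA0 : 0 ≤ A) (hB0 : 0 ≤ B) (hC0 : 0 ≤ C)
    (hAP : A ≤ P) (hCR : C ≤ R)
    (c1 : Sab ^ 2 ≤ A * B) (c2 : Sbc ^ 2 ≤ B * C)
    (hu0 : 0 ≤ u) (hu2 : 3 * u ≤ Q)
    (key : P * Sbc + Q * Sab - Q * Sac ≤ P * Q - P * B + u * Sab) :
    P⁻¹ * Sab + Q⁻¹ * Sbc ≤ 1 + P⁻¹ * Sac := by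
  have main : Q * Sab + P * Sbc ≤ P * Q + Q * Sac := by
    rcases le_or_gt Q (6 * B) with hcase | hcase
    · -- B is large : use the key inequality
      have hPB : Q ^ 2 ≤ 9 * (P * B) := by
        nlinarith [mul_nonneg (by linarith : (0:ℝ) ≤ 3 * P - 2 * Q)
            (by linarith : (0:ℝ) ≤ 6 * B - Q),
          mul_nonneg (by linarith : (0:ℝ) ≤ 3 * P - 2 * Q) hQ.le,
          mul_nonneg (by linarith : (0:ℝ) ≤ 6 * B - Q) hQ.le]
      have hSab2 : Sab ^ 2 ≤ P * B :=
        le_trans c1 (mul_le_mul_of_nonneg_right hAP hB0)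
      have c3 : (Q * Sab) ^ 2 ≤ (3 * (P * B)) ^ 2 := by
        have d1 : 0 ≤ 9 * (P * B) * (P * B - Sab ^ 2) :=
          mul_nonneg (by positivity) (by linarith)
        have d2 : 0 ≤ Sab ^ 2 * (9 * (P * B) - Q ^ 2) :=
          mul_nonneg (sq_nonneg _) (by linarith)
        nlinarith [d1, d2]
      have hQSab : Q * Sab ≤ 3 * (P * B) :=
        gd_le_of_sq_le_sq c3 (mul_nonneg hQ.le hSab0) (by positivity)
      have huSab : u * Sab ≤ P * B := by
        have h3 : 3 * u * Sab ≤ Q * Sab :=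
          mul_le_mul_of_nonneg_right hu2 hSab0
        linarith
      linarith [key]
    · -- B is small : both cross terms are at most half of the row sums
      have hSab2 : Sab ^ 2 ≤ (P / 2) ^ 2 := by
        have h1 : Sab ^ 2 ≤ P * B :=
          le_trans c1 (mul_le_mul_of_nonneg_right hAP hB0)
        nlinarith [mul_le_mul_of_nonneg_left hcase.le hP.le,
          mul_le_mul_of_nonneg_left hPQ hP.le]
      have hSabP : Sab ≤ P / 2 := gd_le_of_sq_le_sq hSab2 hSab0 (by linarith)
      have hSbc2 : Sbc ^ 2 ≤ (Q / 2) ^ 2 := by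
        have h1 : Sbc ^ 2 ≤ B * R :=
          le_trans c2 (mul_le_mul_of_nonneg_left hCR hB0)
        nlinarith [mul_le_mul_of_nonneg_right hcase.le hR.le,
          mul_le_mul_of_nonneg_left hRQ hQ.le, mul_pos hQ hR]
      have hSbcQ : Sbc ≤ Q / 2 := gd_le_of_sq_le_sq hSbc2 hSbc0 (by linarith)
      have m1 := mul_le_mul_of_nonneg_left hSabP hQ.le
      have m2 := mul_le_mul_of_nonneg_left hSbcQ hP.le
      nlinarith [mul_nonneg hQ.le hSac0]
  have hPQpos : 0 < P * Q := mul_pos hP hQ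
  calc P⁻¹ * Sab + Q⁻¹ * Sbc = (Q * Sab + P * Sbc) / (P * Q) := by
        field_simp
    _ ≤ (P * Q + Q * Sac) / (P * Q) := (div_le_div_iff_of_pos_right hPQpos).mpr main
    _ = 1 + P⁻¹ * Sac := by
        field_simp

/-- Pure real-number part of the case `i = k ≠ j`. -/
lemma gd_alg_ik (P Q Sab A B : ℝ)
    (hP : 0 < P) (hQ : 0 < Q) (hPQ : 2 * Q ≤ 3 * P)
    (hSab0 : 0 ≤ Sab) (hA0 : 0 ≤ A) (hB0 : 0 ≤ B)
    (c1 : Sab ^ 2 ≤ A * B) (h1 : Sab + B ≤ Q) :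
    P⁻¹ * Sab + Q⁻¹ * Sab ≤ 1 + P⁻¹ * A := by
  have h2 : Q * Sab ≤ Q * A + P * B := by
    have c3 : (Q * Sab) ^ 2 ≤ (Q * A + P * B) ^ 2 := by
      have d1 : 0 ≤ Q ^ 2 * (A * B - Sab ^ 2) := mul_nonneg (sq_nonneg _) (by linarith)
      have d2 : 0 ≤ (4 * P - Q) * Q * (A * B) := by
        apply mul_nonneg (mul_nonneg (by linarith) hQ.le) (mul_nonneg hA0 hB0)
      have d3 : 0 ≤ (Q * A - P * B) ^ 2 := sq_nonneg _
      nlinarith [d1, d2, d3]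
    exact gd_le_of_sq_le_sq c3 (mul_nonneg hQ.le hSab0) (by positivity)
  have main : Q * Sab + P * Sab ≤ P * Q + Q * A := by
    have h3 : P * Sab ≤ P * (Q - B) := mul_le_mul_of_nonneg_left (by linarith) hP.le
    nlinarith [h2, h3]
  have hPQpos : 0 < P * Q := mul_pos hP hQ
  calc P⁻¹ * Sab + Q⁻¹ * Sab = (Q * Sab + P * Sab) / (P * Q) := by
        field_simp
    _ ≤ (P * Q + Q * A) / (P * Q) := (div_le_div_iff_of_pos_right hPQpos).mpr main
    _ = 1 + P⁻¹ * A := by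
        field_simp

theorem gd_triangle_of_comparable_row_sums {n m : ℕ} (W : Matrix (Fin n) (Fin m) ℝ)
    (hW : ∀ i j, 0 ≤ W i j)
    (hp : ∀ i, 0 < ∑ s, W i s)
    (hq : ∀ s, 0 < ∑ i, W i s)
    (hratio : (2 : ℝ) / 3 < (⨅ i, ∑ s, W i s) / (⨆ i, ∑ s, W i s)) :
    ∀ i j k : Fin n,
      (1 - (∑ s, W i s)⁻¹ * ∑ s, W i s * W j s / (∑ l, W l s)) +
      (1 - (∑ s, W j s)⁻¹ * ∑ s, W j s * W k s / (∑ l, W l s)) ≥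
      (1 - (∑ s, W i s)⁻¹ * ∑ s, W i s * W k s / (∑ l, W l s)) := by
  intro i j k
  -- comparability of any two row sums
  have hcomp : ∀ x y : Fin n, 2 * ∑ s, W y s ≤ 3 * ∑ s, W x s := by
    intro x y
    have hne : Nonempty (Fin n) := ⟨i⟩
    have hsup_pos : 0 < ⨆ l, ∑ s, W l s :=
      lt_of_lt_of_le (hp x) (le_ciSup (f := fun l => ∑ s, W l s) (Finite.bddAbove_range _) x)
    have h1 : (2 : ℝ) / 3 * (⨆ l, ∑ s, W l s) < ⨅ l, ∑ s, W l s := by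
      have := (div_lt_div_iff₀ (by norm_num : (0:ℝ) < 3) hsup_pos).mp hratio
      linarith
    have h2 : (⨅ l, ∑ s, W l s) ≤ ∑ s, W x s := ciInf_le (f := fun l => ∑ s, W l s) (Finite.bddBelow_range _) x
    have h3 : (∑ s, W y s) ≤ ⨆ l, ∑ s, W l s := le_ciSup (f := fun l => ∑ s, W l s) (Finite.bddAbove_range _) y
    nlinarith [h1, h2, h3]
  have hentry_le : ∀ (x : Fin n) (s : Fin m), W x s ≤ ∑ l, W l s := fun x s =>
    Finset.single_le_sum (f := fun l => W l s) (fun l _ => hW l s) (Finset.mem_univ x)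
  by_cases hij : i = j
  · -- i = j : reduces to g(i,i) ≤ 1
    subst hij
    have h1 : ∑ s, W i s * W i s / (∑ l, W l s) ≤ ∑ s, W i s :=
      gd_diag_le (fun s => W i s) (fun s => ∑ l, W l s) hq (fun s => hW i s)
        (fun s => hentry_le i s)
    have h2 : (∑ s, W i s)⁻¹ * ∑ s, W i s * W i s / (∑ l, W l s) ≤ 1 := by
      rw [inv_mul_eq_div, div_le_one (hp i)]
      exact h1
    linarith
  · by_cases hjk : j = k
    · -- j = k : reduces to g(j,j) ≤ 1
      subst hjk
      have h1 : ∑ s, W j s * W j s / (∑ l, W l s) ≤ ∑ s, W j s :=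
        gd_diag_le (fun s => W j s) (fun s => ∑ l, W l s) hq (fun s => hW j s)
          (fun s => hentry_le j s)
      have h2 : (∑ s, W j s)⁻¹ * ∑ s, W j s * W j s / (∑ l, W l s) ≤ 1 := by
        rw [inv_mul_eq_div, div_le_one (hp j)]
        exact h1
      linarith
    · by_cases hik : i = k
      · -- i = k ≠ j
        subst hik
        have hab : ∀ s, W i s + W j s ≤ ∑ l, W l s := by
          intro s
          have h := Finset.sum_le_sum_of_subset_of_nonneg
            (Finset.subset_univ ({i, j} : Finset (Fin n)))
            (fun l _ _ => hW l s)
          rwa [Finset.sum_insert (by simpa using hij), Finset.sum_singleton] at h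
        have hB1 : ∑ s, W j s * W j s / (∑ l, W l s) + ∑ s, W i s * W j s / (∑ l, W l s)
            ≤ ∑ s, W j s := by
          have hsum : ∑ s, (W j s * W j s / (∑ l, W l s) + W i s * W j s / (∑ l, W l s))
              ≤ ∑ s, W j s := by
            apply Finset.sum_le_sum
            intro s _
            rw [← add_div, div_le_iff₀ (hq s)]
            nlinarith [mul_le_mul_of_nonneg_left (hab s) (hW j s), hW i s, hW j s]
          rwa [Finset.sum_add_distrib] at hsum
        have hmain : (∑ s, W i s)⁻¹ * (∑ s, W i s * W j s / (∑ l, W l s))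
            + (∑ s, W j s)⁻¹ * (∑ s, W i s * W j s / (∑ l, W l s))
            ≤ 1 + (∑ s, W i s)⁻¹ * (∑ s, W i s * W i s / (∑ l, W l s)) := by
          apply gd_alg_ik _ _ _ _ _ (hp i) (hp j) (hcomp i j)
            (gd_sum_nonneg (fun s => W i s) (fun s => W j s) _ hq
              (fun s => hW i s) (fun s => hW j s))
            (gd_sum_nonneg (fun s => W i s) (fun s => W i s) _ hq
              (fun s => hW i s) (fun s => hW i s))
            (gd_sum_nonneg (fun s => W j s) (fun s => W j s) _ hq
              (fun s => hW j s) (fun s => hW j s))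
            (gd_cauchy (fun s => W i s) (fun s => W j s) _ hq)
            (by linarith [hB1])
        have hcomm : ∑ s, W j s * W i s / (∑ l, W l s)
            = ∑ s, W i s * W j s / (∑ l, W l s) :=
          Finset.sum_congr rfl fun s _ => by ring
        rw [ge_iff_le, hcomm]
        linarith [hmain]
      · -- i, j, k pairwise distinct
        have habc : ∀ s, W i s + W j s + W k s ≤ ∑ l, W l s := by
          intro s
          have h := Finset.sum_le_sum_of_subset_of_nonneg
            (Finset.subset_univ ({i, j, k} : Finset (Fin n)))
            (fun l _ _ => hW l s)
          rwa [Finset.sum_insert (by simp [hij, hik]),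
            Finset.sum_insert (by simpa using hjk), Finset.sum_singleton, ← add_assoc] at h
        have hbq : ∀ s, W j s ≤ ∑ l, W l s := fun s => hentry_le j s
        -- the auxiliary constant u
        set u : ℝ := max ((∑ s, W j s) - ∑ s, W i s) 0 with hu
        have hu0 : 0 ≤ u := le_max_right _ _
        have hu1 : (∑ s, W j s) - ∑ s, W i s ≤ u := le_max_left _ _
        have hu2 : 3 * u ≤ ∑ s, W j s := by
          rcases le_total ((∑ s, W j s) - ∑ s, W i s) 0 with h | h
          · rw [hu, max_eq_right h]
            linarith [hp j]
          · rw [hu, max_eq_left h]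
            linarith [hcomp i j]
        have key : (∑ s, W i s) * (∑ s, W j s * W k s / (∑ l, W l s))
            + (∑ s, W j s) * (∑ s, W i s * W j s / (∑ l, W l s))
            - (∑ s, W j s) * (∑ s, W i s * W k s / (∑ l, W l s))
            ≤ (∑ s, W i s) * (∑ s, W j s)
              - (∑ s, W i s) * (∑ s, W j s * W j s / (∑ l, W l s))
              + u * (∑ s, W i s * W j s / (∑ l, W l s)) :=
          gd_key (fun s => W i s) (fun s => W j s) (fun s => W k s)
            (fun s => ∑ l, W l s) _ _ u rfl rfl
            (fun s => hW i s) (fun s => hW j s) (fun s => hW k s) hq habc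
            (hp i).le (hp j).le hu0 hu1
        have hmain : (∑ s, W i s)⁻¹ * (∑ s, W i s * W j s / (∑ l, W l s))
            + (∑ s, W j s)⁻¹ * (∑ s, W j s * W k s / (∑ l, W l s))
            ≤ 1 + (∑ s, W i s)⁻¹ * (∑ s, W i s * W k s / (∑ l, W l s)) := by
          apply gd_alg_main _ _ (∑ s, W k s) _ _ _
            (∑ s, W i s * W i s / (∑ l, W l s))
            (∑ s, W j s * W j s / (∑ l, W l s))
            (∑ s, W k s * W k s / (∑ l, W l s)) u
            (hp i) (hp j) (hp k) (hcomp i j) (hcomp j k)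
            (gd_sum_nonneg (fun s => W i s) (fun s => W j s) _ hq
              (fun s => hW i s) (fun s => hW j s))
            (gd_sum_nonneg (fun s => W j s) (fun s => W k s) _ hq
              (fun s => hW j s) (fun s => hW k s))
            (gd_sum_nonneg (fun s => W i s) (fun s => W k s) _ hq
              (fun s => hW i s) (fun s => hW k s))
            (gd_sum_nonneg (fun s => W i s) (fun s => W i s) _ hq
              (fun s => hW i s) (fun s => hW i s))
            (gd_sum_nonneg (fun s => W j s) (fun s => W j s) _ hq
              (fun s => hW j s) (fun s => hW j s))
            (gd_sum_nonneg (fun s => W k s) (fun s => W k s) _ hq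
              (fun s => hW k s) (fun s => hW k s))
            (gd_diag_le (fun s => W i s) (fun s => ∑ l, W l s) hq (fun s => hW i s)
              (fun s => hentry_le i s))
            (gd_diag_le (fun s => W k s) (fun s => ∑ l, W l s) hq (fun s => hW k s)
              (fun s => hentry_le k s))
            (gd_cauchy (fun s => W i s) (fun s => W j s) _ hq)
            (gd_cauchy (fun s => W j s) (fun s => W k s) _ hq)
            hu0 hu2 key
        linarith [hmain]
end

section
/- The triangle inequality for g_d^{(1)} can fail without the row-sum condition: for the 3×2 matrix W = [[1,0],[2,6],[0,12]], one has g_d^{(1)}(1,2) + g_d^{(1)}(2,3) − g_d^{(1)}(1,3) = 1/3 + 1/2 − 1 < 0. -/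
open BigOperators

theorem triangle_fails_counterexample :
    ∀ W : Matrix (Fin 3) (Fin 2) ℝ,
      W = !![1, 0; 2, 6; 0, 12] →
      ∀ gd : Fin 3 → Fin 3 → ℝ,
        (∀ i j, gd i j = 1 - (∑ s, W i s)⁻¹ * ∑ s, W i s * W j s / (∑ l, W l s)) →
        gd 0 1 + gd 1 2 - gd 0 2 = 1/3 + 1/2 - 1 ∧ (1/3 + 1/2 - 1 : ℝ) < 0 := by
  intro W hW gd hgd
  subst hW
  constructor
  · rw [hgd, hgd, hgd]
    simp [Fin.sum_univ_succ, Matrix.cons_val_zero, Matrix.cons_val_one]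
    norm_num
  · norm_num
end

section
/- If g_d^{(k)}(i,j) = 0 (i.e., (S^k)_{ij} = 1) for some k ≥ 1, then i = j and object i is isolated: every feature s with w_{is} > 0 satisfies w_{ls} = 0 for all l ≠ i. -/
open Matrix BigOperators

theorem isolated_of_gd_zero {n m : ℕ} (W : Matrix (Fin n) (Fin m) ℝ)
    (hW : ∀ i j, 0 ≤ W i j)
    (hp : ∀ i, 0 < ∑ s, W i s)
    (hq : ∀ s, 0 < ∑ i, W i s)
    (k : ℕ) (hk : 1 ≤ k) (i j : Fin n)
    (h : ((Matrix.diagonal (fun i => (∑ s, W i s)⁻¹) * W *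
        Matrix.diagonal (fun s => (∑ i, W i s)⁻¹) * Wᵀ) ^ k) i j = 1) :
    i = j ∧ ∀ s : Fin m, 0 < W i s → ∀ l : Fin n, l ≠ i → W l s = 0 := by
  set S : Matrix (Fin n) (Fin n) ℝ :=
    Matrix.diagonal (fun i => (∑ s, W i s)⁻¹) * W *
      Matrix.diagonal (fun s => (∑ i, W i s)⁻¹) * Wᵀ with hSdef
  -- entry formula
  have happ : ∀ a b : Fin n,
      S a b = ∑ s, (∑ t, W a t)⁻¹ * W a s * ((∑ l, W l s)⁻¹ * W b s) := by
    intro a b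
    rw [hSdef, Matrix.mul_apply]
    simp only [Matrix.mul_diagonal, Matrix.diagonal_mul, Matrix.transpose_apply]
    exact Finset.sum_congr rfl fun s _ => by ring
  have hterm_nonneg : ∀ a b s, 0 ≤ (∑ t, W a t)⁻¹ * W a s * ((∑ l, W l s)⁻¹ * W b s) := by
    intro a b s
    have h1 := inv_nonneg.mpr (hp a).le
    have h2 := inv_nonneg.mpr (hq s).le
    exact mul_nonneg (mul_nonneg h1 (hW a s)) (mul_nonneg h2 (hW b s))
  have hSnonneg : ∀ a b, 0 ≤ S a b := by
    intro a b
    rw [happ]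
    exact Finset.sum_nonneg fun s _ => hterm_nonneg a b s
  -- row sums of S equal 1
  have hrow : ∀ a, ∑ b, S a b = 1 := by
    intro a
    have : ∑ b, S a b = ∑ s, (∑ t, W a t)⁻¹ * W a s * ((∑ l, W l s)⁻¹ * (∑ b, W b s)) := by
      simp only [happ]
      rw [Finset.sum_comm]
      refine Finset.sum_congr rfl fun s _ => ?_
      rw [Finset.mul_sum, Finset.mul_sum]
    rw [this]
    have : ∀ s ∈ Finset.univ, (∑ t, W a t)⁻¹ * W a s * ((∑ l, W l s)⁻¹ * (∑ b, W b s))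
        = (∑ t, W a t)⁻¹ * W a s := by
      intro s _
      rw [inv_mul_cancel₀ (hq s).ne', mul_one]
    rw [Finset.sum_congr rfl this, ← Finset.mul_sum, inv_mul_cancel₀ (hp a).ne']
  -- positive diagonal
  have hSdiag : ∀ a, 0 < S a a := by
    intro a
    obtain ⟨s, -, hs⟩ := Finset.exists_ne_zero_of_sum_ne_zero (hp a).ne'
    have hs' : 0 < W a s := lt_of_le_of_ne (hW a s) (Ne.symm hs)
    have hterm : 0 < (∑ t, W a t)⁻¹ * W a s * ((∑ l, W l s)⁻¹ * W a s) := by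
      have h1 := inv_pos.mpr (hp a)
      have h2 := inv_pos.mpr (hq s)
      positivity
    rw [happ]
    exact lt_of_lt_of_le hterm
      (Finset.single_le_sum (fun t _ => hterm_nonneg a a t) (Finset.mem_univ s))
  -- powers: nonneg
  have hpow_nonneg : ∀ r : ℕ, ∀ a b, 0 ≤ (S ^ r) a b := by
    intro r
    induction r with
    | zero =>
      intro a b
      simp [Matrix.one_apply]
      split <;> norm_num
    | succ r ih =>
      intro a b
      rw [pow_succ, Matrix.mul_apply]
      exact Finset.sum_nonneg fun c _ => mul_nonneg (ih a c) (hSnonneg c b)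
  -- powers: row sums 1
  have hpow_row : ∀ r : ℕ, ∀ a, ∑ b, (S ^ r) a b = 1 := by
    intro r
    induction r with
    | zero => intro a; simp [Matrix.one_apply]
    | succ r ih =>
      intro a
      simp only [pow_succ, Matrix.mul_apply]
      rw [Finset.sum_comm]
      calc ∑ c, ∑ b, (S ^ r) a c * S c b
          = ∑ c, (S ^ r) a c * ∑ b, S c b := by
            exact Finset.sum_congr rfl fun c _ => (Finset.mul_sum _ _ _).symm
        _ = ∑ c, (S ^ r) a c := by
            exact Finset.sum_congr rfl fun c _ => by rw [hrow c, mul_one]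
        _ = 1 := ih a
  -- powers: diagonal-step lower bound
  have hpow_ge : ∀ r : ℕ, ∀ a b, (S ^ r) a a * S a b ≤ (S ^ (r + 1)) a b := by
    intro r a b
    rw [pow_succ, Matrix.mul_apply]
    exact Finset.single_le_sum
      (fun c _ => mul_nonneg (hpow_nonneg r a c) (hSnonneg c b)) (Finset.mem_univ a)
  -- powers: positive diagonal
  have hpow_diag : ∀ r : ℕ, ∀ a, 0 < (S ^ r) a a := by
    intro r
    induction r with
    | zero => intro a; simp [Matrix.one_apply]
    | succ r ih =>
      intro a
      exact lt_of_lt_of_le (mul_pos (ih a) (hSdiag a)) (hpow_ge r a a)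
  -- from h: all other entries in row i of S^k vanish
  have hzero : ∀ b : Fin n, b ≠ j → (S ^ k) i b = 0 := by
    have hsum := hpow_row k i
    rw [← Finset.add_sum_erase _ _ (Finset.mem_univ j)] at hsum
    rw [h] at hsum
    have hrest : ∑ b ∈ Finset.univ.erase j, (S ^ k) i b = 0 := by linarith
    intro b hb
    have := (Finset.sum_eq_zero_iff_of_nonneg
      (fun c _ => hpow_nonneg k i c)).mp hrest b (Finset.mem_erase.mpr ⟨hb, Finset.mem_univ b⟩)
    exact this
  -- i = j
  have hij : i = j := by
    by_contra hij
    exact (hpow_diag k i).ne' (hzero i hij)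
  refine ⟨hij, ?_⟩
  intro s hs l hl
  by_contra hls
  have hls' : 0 < W l s := lt_of_le_of_ne (hW l s) (Ne.symm hls)
  -- S i l > 0
  have hSil : 0 < S i l := by
    have hterm : 0 < (∑ t, W i t)⁻¹ * W i s * ((∑ a, W a s)⁻¹ * W l s) := by
      have h1 := inv_pos.mpr (hp i)
      have h2 := inv_pos.mpr (hq s)
      positivity
    rw [happ]
    exact lt_of_lt_of_le hterm
      (Finset.single_le_sum (fun t _ => hterm_nonneg i l t) (Finset.mem_univ s))
  obtain ⟨r, rfl⟩ : ∃ r, k = r + 1 := ⟨k - 1, by omega⟩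
  have hpos : 0 < (S ^ (r + 1)) i l :=
    lt_of_lt_of_le (mul_pos (hpow_diag r i) hSil) (hpow_ge r i l)
  have : (S ^ (r + 1)) i l = 0 := hzero l (by rw [← hij]; exact hl)
  exact hpos.ne' this
end

section
/- Normalized graph diffusion distance is a metametric: if W is row-stochastic (each object's feature vector sums to 1) with positive column sums, then n_d^{(k)}(i,j) := 1 − ((WQ^{-1}W^T)^k)_{ij} is nonnegative, symmetric, satisfies the triangle inequality, and n_d^{(k)}(i,j) = 0 implies i = j. -/
open Matrix BigOperators

theorem normalized_diffusion_metametric {n m : ℕ} (W : Matrix (Fin n) (Fin m) ℝ)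
    (hW : ∀ i j, 0 ≤ W i j)
    (hrow : ∀ i, ∑ k, W i k = 1)
    (hq : ∀ k, 0 < ∑ i, W i k)
    (k : ℕ) (hk : 1 ≤ k) :
    ∀ nd : Fin n → Fin n → ℝ,
      (∀ i j, nd i j =
        1 - ((W * Matrix.diagonal (fun l => (∑ s, W s l)⁻¹) * Wᵀ) ^ k) i j) →
      (∀ i j, 0 ≤ nd i j) ∧
      (∀ i j, nd i j = nd j i) ∧
      (∀ i j l, nd i j + nd j l ≥ nd i l) ∧
      (∀ i j, nd i j = 0 → i = j) := by
  intro nd hnd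
  classical
  set Q : Matrix (Fin m) (Fin m) ℝ :=
    Matrix.diagonal (fun l => (∑ s, W s l)⁻¹) with hQ
  set P : Matrix (Fin n) (Fin n) ℝ := W * Q * Wᵀ with hPdef
  have hPentry : ∀ i j, P i j = ∑ l, W i l * (∑ s, W s l)⁻¹ * W j l := by
    intro i j
    rw [hPdef, Matrix.mul_apply]
    refine Finset.sum_congr rfl fun l _ => ?_
    rw [hQ, Matrix.mul_diagonal, Matrix.transpose_apply]
  -- positive semidefiniteness
  have hQpsd : Q.PosSemidef :=
    Matrix.posSemidef_diagonal_iff.mpr (fun l => inv_nonneg.mpr (hq l).le)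
  have hPpsd : P.PosSemidef := by
    have := hQpsd.mul_mul_conjTranspose_same W
    rwa [Matrix.conjTranspose_eq_transpose_of_trivial] at this
  have hSpsd : (P ^ k).PosSemidef := hPpsd.pow k
  set S : Matrix (Fin n) (Fin n) ℝ := P ^ k with hSdef
  -- entrywise nonnegativity and row sums of P
  have hPnn : ∀ i j, 0 ≤ P i j := by
    intro i j
    rw [hPentry]
    exact Finset.sum_nonneg fun l _ =>
      mul_nonneg (mul_nonneg (hW i l) (inv_nonneg.mpr (hq l).le)) (hW j l)
  have hProw : ∀ i, ∑ j, P i j = 1 := by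
    intro i
    have : ∑ j, P i j = ∑ l, W i l * (∑ s, W s l)⁻¹ * (∑ j, W j l) := by
      simp only [hPentry]
      rw [Finset.sum_comm]
      exact Finset.sum_congr rfl fun l _ => by rw [Finset.mul_sum]
    rw [this]
    have : ∀ l, W i l * (∑ s, W s l)⁻¹ * (∑ j, W j l) = W i l := by
      intro l
      rw [mul_assoc, inv_mul_cancel₀ (hq l).ne', mul_one]
    rw [Finset.sum_congr rfl fun l _ => this l, hrow]
  -- entrywise nonnegativity and row sums of powers of P
  have hpow : ∀ t : ℕ, (∀ i j, 0 ≤ (P ^ t) i j) ∧ (∀ i, ∑ j, (P ^ t) i j = 1) := by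
    intro t
    induction t with
    | zero =>
      constructor
      · intro i j
        simp [Matrix.one_apply]
        positivity
      · intro i
        simp [Matrix.one_apply]
    | succ t ih =>
      constructor
      · intro i j
        rw [pow_succ, Matrix.mul_apply]
        exact Finset.sum_nonneg fun a _ => mul_nonneg (ih.1 i a) (hPnn a j)
      · intro i
        simp only [pow_succ, Matrix.mul_apply]
        rw [Finset.sum_comm]
        have : ∀ a, ∑ j, (P ^ t) i a * P a j = (P ^ t) i a := by
          intro a
          rw [← Finset.mul_sum, hProw, mul_one]
        rw [Finset.sum_congr rfl fun a _ => this a, ih.2]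
  have hSnn : ∀ i j, 0 ≤ S i j := (hpow k).1
  have hSrow : ∀ i, ∑ j, S i j = 1 := (hpow k).2
  have hSsym : ∀ i j, S i j = S j i := by
    intro i j
    have := hSpsd.isHermitian.apply j i
    simpa using this
  -- each entry is at most the row sum
  have hSle : ∀ i j, S i j ≤ 1 := by
    intro i j
    calc S i j ≤ ∑ l, S i l :=
          Finset.single_le_sum (fun l _ => hSnn i l) (Finset.mem_univ j)
      _ = 1 := hSrow i
  have hdiag_le_one : ∀ i, S i i ≤ 1 := fun i => hSle i i
  -- 2 * S i j ≤ S i i + S j j via PSD quadratic form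
  have hkey : ∀ i j, 2 * S i j ≤ S i i + S j j := by
    intro i j
    by_cases hij : i = j
    · subst hij; linarith [hSnn i i]
    · set x : Fin n → ℝ :=
        fun a => (if a = i then (1:ℝ) else 0) - (if a = j then (1:ℝ) else 0) with hx
      have h0 := hSpsd.dotProduct_mulVec_nonneg x
      have hmv : ∀ a, (S *ᵥ x) a = S a i - S a j := by
        intro a
        simp [Matrix.mulVec, dotProduct, hx, mul_sub, mul_ite,
          Finset.sum_sub_distrib]
      have hdot : star x ⬝ᵥ (S *ᵥ x) = S i i - S i j - (S j i - S j j) := by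
        have hstar : star x = x := by
          funext a
          simp [hx]
        rw [hstar]
        simp only [dotProduct]
        rw [Finset.sum_congr rfl fun a _ => by rw [hmv a]]
        have hexp : ∀ a : Fin n, x a * (S a i - S a j) =
            ((if a = i then (1:ℝ) else 0) * (S a i - S a j)
              - (if a = j then (1:ℝ) else 0) * (S a i - S a j)) := by
          intro a
          rw [hx]
          ring
        rw [Finset.sum_congr rfl fun a _ => hexp a, Finset.sum_sub_distrib]
        simp only [ite_mul, one_mul, zero_mul, Finset.sum_ite_eq',
          Finset.mem_univ, if_true]
      rw [hdot] at h0
      have hsym := hSsym i j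
      nlinarith [h0]
  -- two distinct entries of a row sum to at most 1
  have hpair : ∀ j i l, i ≠ l → S j i + S j l ≤ 1 := by
    intro j i l hil
    calc S j i + S j l = ∑ x ∈ ({i, l} : Finset (Fin n)), S j x :=
          (Finset.sum_pair hil).symm
      _ ≤ ∑ x, S j x :=
          Finset.sum_le_sum_of_subset_of_nonneg (Finset.subset_univ _)
            (fun x _ _ => hSnn j x)
      _ = 1 := hSrow j
  refine ⟨?_, ?_, ?_, ?_⟩
  · intro i j
    rw [hnd i j]
    have := hSle i j
    linarith
  · intro i j
    rw [hnd i j, hnd j i]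
    rw [hSsym i j]
  · intro i j l
    rw [hnd i j, hnd j l, hnd i l]
    by_cases hil : i = l
    · subst hil
      have h1 := hkey i j
      have h2 := hdiag_le_one j
      have h3 := hSsym i j
      have h4 := hSsym j i
      have h5 := hSnn i i
      linarith [hSle i i]
    · have h1 := hpair j i l hil
      have h2 := hSnn i l
      have h3 := hSsym i j
      linarith
  · intro i j h
    by_contra hij
    rw [hnd i j] at h
    have hSij : S i j = 1 := by linarith
    have h1 : S i i + S i j ≤ 1 := hpair i i j hij
    have h2 := hkey i j
    have h3 := hdiag_le_one j
    linarith
end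

section
/- For a row-stochastic nonnegative matrix W with positive column sums and three distinct rows 1, 2, 3, the quantity Σ_k (w_{1k}+w_{3k}) w_{2k} / (w_{1k}+w_{2k}+w_{3k}) (summing only over k with w_{1k}+w_{2k}+w_{3k} > 0) is at most 2/3. -/
open BigOperators

lemma key_ineq (x y : ℝ) (hx : 0 ≤ x) (hy : 0 ≤ y) :
    x * y / (x + y) ≤ x / 9 + 4 * y / 9 := by
  rcases eq_or_lt_of_le (add_nonneg hx hy) with h | h
  · simp [← h]
    positivity
  · rw [div_le_iff₀ h]
    nlinarith [sq_nonneg (x - 2 * y)]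

theorem core_combinatorial_step {n m : ℕ} (W : Matrix (Fin n) (Fin m) ℝ)
    (a b c : Fin n) (hab : a ≠ b) (hbc : b ≠ c) (hac : a ≠ c)
    (hW : ∀ i j, 0 ≤ W i j)
    (ha : ∑ k, W a k = 1) (hb : ∑ k, W b k = 1) (hc : ∑ k, W c k = 1)
    (hq : ∀ k, 0 < ∑ i, W i k) :
    (∑ k ∈ Finset.univ.filter (fun k => 0 < W a k + W b k + W c k),
      (W a k + W c k) * W b k / (W a k + W b k + W c k)) ≤ 2/3 := by
  have h1 : (∑ k ∈ Finset.univ.filter (fun k => 0 < W a k + W b k + W c k),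
      (W a k + W c k) * W b k / (W a k + W b k + W c k)) ≤
      ∑ k, ((W a k + W c k) / 9 + 4 * W b k / 9) := by
    calc (∑ k ∈ Finset.univ.filter (fun k => 0 < W a k + W b k + W c k),
          (W a k + W c k) * W b k / (W a k + W b k + W c k))
        ≤ ∑ k ∈ Finset.univ.filter (fun k => 0 < W a k + W b k + W c k),
          ((W a k + W c k) / 9 + 4 * W b k / 9) := by
          refine Finset.sum_le_sum fun k _ => ?_
          have := key_ineq (W a k + W c k) (W b k)
            (add_nonneg (hW a k) (hW c k)) (hW b k)
          calc (W a k + W c k) * W b k / (W a k + W b k + W c k)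
              = (W a k + W c k) * W b k / ((W a k + W c k) + W b k) := by ring_nf
            _ ≤ _ := this
      _ ≤ ∑ k, ((W a k + W c k) / 9 + 4 * W b k / 9) := by
          refine Finset.sum_le_sum_of_subset_of_nonneg (Finset.filter_subset _ _)
            fun k _ _ => ?_
          have := hW a k; have := hW b k; have := hW c k
          positivity
  calc _ ≤ _ := h1
    _ = 2/3 := by
      rw [Finset.sum_add_distrib]
      simp only [add_div, ← Finset.sum_div, Finset.sum_add_distrib, ← Finset.mul_sum,
        show (∀ k, 4 * W b k / 9 = 4/9 * W b k) from fun k => by ring]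
      rw [ha, hb, hc]; norm_num
end
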